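/- For every commutative ring A, every family of weights R : ℤ → A, every m ≥ 1, all g_1, …, g_m ∈ A, every integer n ≥ 0 and every natural number j, the following inversion formula expressing V' in terms of the quantities Γ holds: V'_{n+2j−1,n−2} = Σ_{i=0}^{j} (−1)^{i−1} · Π_{n−1,n+2j−2}(i) · Γ_{2j−2i}(n) + δ_{j,0} · (R_{n−1} + δ_{n,0}). -/

import Mathlib

open Finset

variable {A : Type*} [CommRing A]

/-- End height of a walk starting at a given height, with steps given by a list of
Booleans (`true` = ascending step `+1`, `false` = descending step `-1`). -/
def walkEnd : ℤ → List Bool → ℤ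
  | a, [] => a
  | a, true :: s => walkEnd (a + 1) s
  | a, false :: s => walkEnd (a - 1) s

/-- Weight of a walk: the product of `R h` over all descending steps `h → h - 1`. -/
def walkWeight (R : ℤ → A) : ℤ → List Bool → A
  | _, [] => 1
  | a, true :: s => walkWeight R (a + 1) s
  | a, false :: s => R a * walkWeight R (a - 1) s

/-- Whether every height visited by the walk (including the first and last) is `≥ c`. -/
def walkAbove (c : ℤ) : ℤ → List Bool → Bool
  | a, [] => decide (c ≤ a)
  | a, true :: s => decide (c ≤ a) && walkAbove c (a + 1) s
  | a, false :: s => decide (c ≤ a) && walkAbove c (a - 1) s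

/-- `Zw R a b k`: the generating function of walks of length `k` from height `a` to
height `b`, each walk weighted by `R h` per descending step from height `h`. -/
def Zw (R : ℤ → A) (a b : ℤ) (k : ℕ) : A :=
  ∑ s : Fin k → Bool,
    if walkEnd a (List.ofFn s) = b then walkWeight R a (List.ofFn s) else 0

/-- `Zwp R a b k`: the same generating function, restricted to walks staying at
heights `≥ a` ("positive walks"). -/
def Zwp (R : ℤ → A) (a b : ℤ) (k : ℕ) : A :=
  ∑ s : Fin k → Bool,
    if walkEnd a (List.ofFn s) = b ∧ walkAbove a a (List.ofFn s) = true then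
      walkWeight R a (List.ofFn s)
    else 0

/-- `Pdim R a b k`: hard-dimer partition function on the segment `[a,b]`: the sum over
`k`-element subsets `S` of `{a+1, …, b}` with no two consecutive elements of
`∏ i in S, R i` (a dimer on `[i-1,i]` carries weight `R i`). -/
noncomputable def Pdim (R : ℤ → A) (a b : ℤ) (k : ℕ) : A :=
  ∑ S ∈ Finset.powersetCard k (Finset.Icc (a + 1) b),
    if ∀ i ∈ S, i + 1 ∉ S then ∏ i ∈ S, R i else 0

/-- `Vp R g m a b = Σ_{k=1}^{m} g_k • Zw R a b (2k-1)`: grand-canonical generating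
function for walks of odd length from `a` to `b`. -/
def Vp (R : ℤ → A) (g : ℕ → A) (m : ℕ) (a b : ℤ) : A :=
  ∑ k ∈ Finset.Icc 1 m, g k * Zw R a b (2 * k - 1)

/-- The conserved quantities `Γ_{2i}(n)`; `Gam R g m i n` stands for `Γ_{2i}(n)`. -/
def Gam (R : ℤ → A) (g : ℕ → A) (m : ℕ) (i : ℕ) (n : ℤ) : A :=
  if i = 0 then R (n - 1) - Vp R g m (n - 1) (n - 2) + (if n = 0 then 1 else 0)
  else
    Zwp R (n - 1) (n - 1) (2 * i) *
        (R (n - 1) - Vp R g m (n - 1) (n - 2) + (if n = 0 then 1 else 0)) -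
      ∑ j ∈ Finset.Icc 1 i,
        Zwp R (n - 1) (n - 1 + 2 * (j : ℤ)) (2 * i) * Vp R g m (n + 2 * (j : ℤ) - 1) (n - 2)

/-- The symmetric conserved quantities `Γ̃_{2i}(n)`; `Gamt R g m i n` stands
for `Γ̃_{2i}(n)`. -/
def Gamt (R : ℤ → A) (g : ℕ → A) (m : ℕ) (i : ℕ) (n : ℤ) : A :=
  if i = 0 then R n - Vp R g m n (n - 1)
  else
    (Zw R n (n - 1) (2 * i - 1) - R (n - 1) * R (n + 1) * Zw R (n - 2) (n + 1) (2 * i - 1)) *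
        (R n - Vp R g m n (n - 1)) -
      ∑ j ∈ Finset.Icc 1 i,
        (Zw R (n - (j : ℤ)) (n + (j : ℤ) - 1) (2 * i - 1) -
            R (n - (j : ℤ) - 1) * R (n + (j : ℤ) + 1) *
              Zw R (n - (j : ℤ) - 2) (n + (j : ℤ) + 1) (2 * i - 1)) *
          Vp R g m (n + (j : ℤ)) (n - (j : ℤ) - 1)

/-- The master equation: `R i = 0` for `i < 0` and `R n = 1 + V'_{n,n-1}` for `n ≥ 0`. -/
def MasterEq (R : ℤ → A) (g : ℕ → A) (m : ℕ) : Prop :=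
  (∀ i : ℤ, i < 0 → R i = 0) ∧ ∀ n : ℤ, 0 ≤ n → R n = 1 + Vp R g m n (n - 1)

/-- `Zodd R a b i = Zw R a b (2i-1)`, with the convention that for `i = 0`
(walks of length `-1`) it equals `1` if `b = a - 1` and `0` otherwise. -/
def Zodd (R : ℤ → A) (a b : ℤ) (i : ℕ) : A :=
  if i = 0 then (if b = a - 1 then 1 else 0) else Zw R a b (2 * i - 1)

/-- Binomial coefficient with an integer lower index, with the convention that it
vanishes for negative lower index. -/
def Cz (n : ℕ) (p : ℤ) : ℤ := if 0 ≤ p then n.choose p.toNat else 0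

/-- recursive version of restricted walk sums -/
def ZA (R : ℤ → A) (c : ℤ) : ℤ → ℤ → ℕ → A
  | a, b, 0 => if a = b ∧ c ≤ a then 1 else 0
  | a, b, k+1 => if c ≤ a then ZA R c (a+1) b k + R a * ZA R c (a-1) b k else 0

lemma walkSum_eq_ZA (R : ℤ → A) (c : ℤ) : ∀ (k : ℕ) (x b : ℤ),
    (∑ s : Fin k → Bool,
      if walkEnd x (List.ofFn s) = b ∧ walkAbove c x (List.ofFn s) = true then
        walkWeight R x (List.ofFn s) else 0) = ZA R c x b k := by
  intro k
  induction k with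
  | zero =>
      intro x b
      simp [ZA, walkEnd, walkAbove, walkWeight, and_comm]
  | succ k ih =>
      intro x b
      rw [← (Fin.consEquiv (fun _ : Fin (k+1) => Bool)).sum_comp]
      rw [Fintype.sum_prod_type, Fintype.sum_bool]
      simp only [Fin.consEquiv_apply, List.ofFn_succ, Fin.cons_succ, Fin.cons_zero,
        walkEnd, walkAbove, walkWeight, ZA]
      by_cases hcx : c ≤ x
      · simp only [hcx, decide_true, Bool.true_and, if_true, ih]
        congr 1
        rw [← ih (x-1) b, Finset.mul_sum]
        exact Finset.sum_congr rfl (fun s _ => by rw [mul_ite, mul_zero])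
      · simp [hcx]

lemma Zwp_eq_ZA (R : ℤ → A) (a b : ℤ) (k : ℕ) : Zwp R a b k = ZA R a a b k :=
  walkSum_eq_ZA R a k a b

lemma ZA_floor (R : ℤ → A) (c : ℤ) : ∀ (k : ℕ) (x b : ℤ), b < c → ZA R c x b k = 0 := by
  intro k
  induction k with
  | zero => intro x b hb; simp only [ZA]; rw [if_neg]; rintro ⟨rfl, h⟩; omega
  | succ k ih =>
      intro x b hb
      simp only [ZA]
      by_cases hcx : c ≤ x
      · rw [if_pos hcx, ih _ _ hb, ih _ _ hb, mul_zero, add_zero]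
      · rw [if_neg hcx]

lemma ZA_far (R : ℤ → A) (c : ℤ) : ∀ (k : ℕ) (x b : ℤ), x + k < b → ZA R c x b k = 0 := by
  intro k
  induction k with
  | zero => intro x b hb; simp only [ZA, Nat.cast_zero, add_zero] at *
            rw [if_neg]; rintro ⟨rfl, h⟩; omega
  | succ k ih =>
      intro x b hb
      simp only [ZA]
      by_cases hcx : c ≤ x
      · rw [if_pos hcx, ih _ _ (by push_cast at *; omega), ih _ _ (by push_cast at *; omega),
          mul_zero, add_zero]
      · rw [if_neg hcx]

lemma Zwp_far (R : ℤ → A) (a b : ℤ) (k : ℕ) (h : a + k < b) : Zwp R a b k = 0 := by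
  rw [Zwp_eq_ZA]; exact ZA_far R a k a b h

lemma Zwp_zero (R : ℤ → A) (a : ℤ) : Zwp R a a 0 = 1 := by
  rw [Zwp_eq_ZA]; simp [ZA]

lemma Pdim_zero (R : ℤ → A) (a b : ℤ) : Pdim R a b 0 = 1 := by
  simp [Pdim]

lemma Pdim_of_empty (R : ℤ → A) (a b : ℤ) (hb : b < a + 1) (i : ℕ) (hi : i ≠ 0) :
    Pdim R a b i = 0 := by
  rw [Pdim, Finset.Icc_eq_empty (by omega), Finset.powersetCard_eq_empty.2 (by simpa using Nat.pos_of_ne_zero hi), Finset.sum_empty]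

lemma Pdim_of_big (R : ℤ → A) (a b : ℤ) (i : ℕ) (hi : (b + 1 - a).toNat < 2 * i) :
    Pdim R a b i = 0 := by
  rw [Pdim]
  apply Finset.sum_eq_zero
  intro S hS
  rw [Finset.mem_powersetCard] at hS
  rw [if_neg]
  intro hntc
  -- S and S.image (+1) are disjoint subsets of Icc (a+1) (b+1)
  have hdisj : Disjoint S (S.image (· + 1)) := by
    rw [Finset.disjoint_right]
    intro x hx hxS
    rw [Finset.mem_image] at hx
    obtain ⟨y, hy, rfl⟩ := hx
    exact hntc y hy hxS
  have hsub : S ∪ S.image (· + 1) ⊆ Finset.Icc (a + 1) (b + 1) := by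
    intro x hx
    rw [Finset.mem_union] at hx
    rcases hx with hx | hx
    · have := hS.1 hx; rw [Finset.mem_Icc] at *; omega
    · rw [Finset.mem_image] at hx
      obtain ⟨y, hy, rfl⟩ := hx
      have := hS.1 hy; rw [Finset.mem_Icc] at *; omega
  have hcard := Finset.card_le_card hsub
  rw [Finset.card_union_of_disjoint hdisj,
    Finset.card_image_of_injective _ (fun x y h => by omega), Int.card_Icc, hS.2] at hcard
  omega

lemma Pdim_succ (R : ℤ → A) (a b : ℤ) (hab : a ≤ b) (i : ℕ) :
    Pdim R a (b + 1) (i + 1) = Pdim R a b (i + 1) + R (b + 1) * Pdim R a (b - 1) i := by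
  have hnotmem : b + 1 ∉ Finset.Icc (a + 1) b := by simp
  have hins : Finset.Icc (a + 1) (b + 1) = insert (b + 1) (Finset.Icc (a + 1) b) := by
    ext x; simp only [Finset.mem_Icc, Finset.mem_insert]; omega
  have hdisj : Disjoint (Finset.powersetCard (i + 1) (Finset.Icc (a + 1) b))
      ((Finset.powersetCard i (Finset.Icc (a + 1) b)).image (insert (b + 1))) := by
    rw [Finset.disjoint_left]
    intro S hS hS'
    rw [Finset.mem_powersetCard] at hS
    rw [Finset.mem_image] at hS'
    obtain ⟨T, _, rfl⟩ := hS'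
    have := hS.1 (Finset.mem_insert_self (b + 1) T)
    rw [Finset.mem_Icc] at this; omega
  rw [show Pdim R a (b+1) (i+1) = ∑ S ∈ Finset.powersetCard (i+1) (Finset.Icc (a + 1) (b+1)),
      (if ∀ y ∈ S, y + 1 ∉ S then ∏ y ∈ S, R y else 0) from rfl,
    hins, Finset.powersetCard_succ_insert hnotmem, Finset.sum_union hdisj]
  congr 1
  rw [Finset.sum_image (by
    intro T1 h1 T2 h2 h
    have hx1 : b + 1 ∉ T1 := fun hc => hnotmem ((Finset.mem_powersetCard.1 h1).1 hc)
    have hx2 : b + 1 ∉ T2 := fun hc => hnotmem ((Finset.mem_powersetCard.1 h2).1 hc)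
    rw [← Finset.erase_insert hx1, h, Finset.erase_insert hx2])]
  have step1 : ∀ T ∈ Finset.powersetCard i (Finset.Icc (a + 1) b),
      (if ∀ y ∈ insert (b+1) T, y + 1 ∉ insert (b+1) T then ∏ y ∈ insert (b+1) T, R y else 0)
      = (if (∀ y ∈ T, y + 1 ∉ T) ∧ b ∉ T then R (b+1) * ∏ y ∈ T, R y else 0) := by
    intro T hT
    rw [Finset.mem_powersetCard] at hT
    have hbT : b + 1 ∉ T := fun hc => hnotmem (hT.1 hc)
    have hcond : (∀ y ∈ insert (b+1) T, y + 1 ∉ insert (b+1) T) ↔ (∀ y ∈ T, y + 1 ∉ T) ∧ b ∉ T := by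
      constructor
      · intro h
        refine ⟨fun y hy hc => h y (Finset.mem_insert_of_mem hy) (Finset.mem_insert_of_mem hc),
          fun hb => h b (Finset.mem_insert_of_mem hb) (Finset.mem_insert_self _ _)⟩
      · rintro ⟨hntc, hb⟩ y hy hc
        rcases Finset.mem_insert.1 hy with rfl | hy
        · rcases Finset.mem_insert.1 hc with h | h
          · omega
          · have := hT.1 h; rw [Finset.mem_Icc] at this; omega
        · rcases Finset.mem_insert.1 hc with h | h
          · exact hb (by rwa [show y = b by omega] at hy)
          · exact hntc y hy h
    rw [if_congr hcond (Finset.prod_insert hbT) rfl]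
  rw [Finset.sum_congr rfl step1]
  have hsub : Finset.powersetCard i (Finset.Icc (a + 1) (b - 1)) ⊆
      Finset.powersetCard i (Finset.Icc (a + 1) b) :=
    Finset.powersetCard_mono (Finset.Icc_subset_Icc_right (by omega))
  rw [show Pdim R a (b-1) i = ∑ S ∈ Finset.powersetCard i (Finset.Icc (a + 1) (b-1)),
      (if ∀ y ∈ S, y + 1 ∉ S then ∏ y ∈ S, R y else 0) from rfl]
  rw [Finset.mul_sum]
  rw [← Finset.sum_subset hsub (by
    intro T hT hT'
    rw [Finset.mem_powersetCard] at hT hT'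
    rw [if_neg]
    rintro ⟨-, hb⟩
    apply hT'
    refine ⟨fun y hy => ?_, hT.2⟩
    have h1 := hT.1 hy
    rw [Finset.mem_Icc] at *
    rcases eq_or_lt_of_le h1.2 with h | h
    · exact absurd (h ▸ hy) hb
    · omega)]
  apply Finset.sum_congr rfl
  intro T hT
  rw [Finset.mem_powersetCard] at hT
  have hb : b ∉ T := fun hc => by have := hT.1 hc; rw [Finset.mem_Icc] at this; omega
  rw [mul_ite, mul_zero]
  congr 1
  simp [hb]

/-- transfer matrix on heights `a, a+1, ..., a+N-1` -/
def Mtr (R : ℤ → A) (a : ℤ) (N : ℕ) : Matrix (Fin N) (Fin N) A :=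
  Matrix.of fun p q =>
    if (p : ℕ) = (q : ℕ) + 1 then 1
    else if (q : ℕ) = (p : ℕ) + 1 then R (a + ((q : ℕ) : ℤ)) else 0

lemma sum_mul_ite_one {N : ℕ} (f : Fin N → A) (c : Fin N) (x : A) :
    ∑ r : Fin N, f r * (if r = c then x else 0) = f c * x := by
  rw [Finset.sum_congr rfl (fun r _ => by rw [mul_ite, mul_zero]), Finset.sum_ite_eq',
    if_pos (Finset.mem_univ c)]

lemma sum_mul_ite_two {N : ℕ} (f : Fin N → A) (c1 c2 : Fin N) (hne : c1 ≠ c2) (x y : A) :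
    ∑ r : Fin N, f r * (if r = c1 then x else if r = c2 then y else 0) = f c1 * x + f c2 * y := by
  have key : ∀ r : Fin N, f r * (if r = c1 then x else if r = c2 then y else 0) =
      (if r = c1 then f r * x else 0) + (if r = c2 then f r * y else 0) := by
    intro r
    by_cases h1 : r = c1
    · subst h1; rw [if_pos rfl, if_pos rfl, if_neg hne, add_zero]
    · rw [if_neg h1, if_neg h1, zero_add, mul_ite, mul_zero]
  rw [Finset.sum_congr rfl (fun r _ => key r), Finset.sum_add_distrib,
    Finset.sum_ite_eq', Finset.sum_ite_eq', if_pos (Finset.mem_univ c1),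
    if_pos (Finset.mem_univ c2)]

lemma ZA_below (R : ℤ → A) (c x b : ℤ) (k : ℕ) (h : x < c) : ZA R c x b k = 0 := by
  cases k with
  | zero => simp only [ZA]; rw [if_neg]; rintro ⟨rfl, h2⟩; omega
  | succ k => simp only [ZA]; rw [if_neg (by omega)]

lemma matpow_eq_ZA (R : ℤ → A) (a : ℤ) (j : ℕ) : ∀ (k : ℕ) (p q : Fin (2*j+1)),
    (q : ℕ) + k ≤ 2*j →
    ((Mtr R a (2*j+1)) ^ k) p q = ZA R a (a + ((q:ℕ):ℤ)) (a + ((p:ℕ):ℤ)) k := by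
  intro k
  induction k with
  | zero =>
      intro p q _
      rw [pow_zero, Matrix.one_apply]
      simp only [ZA]
      by_cases hpq : p = q
      · subst hpq
        rw [if_pos rfl, if_pos ⟨rfl, by omega⟩]
      · rw [if_neg hpq, if_neg]
        rintro ⟨h1, -⟩
        exact hpq (by apply Fin.ext; omega)
  | succ k ih =>
      intro p q hq
      rw [pow_succ, Matrix.mul_apply]
      by_cases hq0 : (q : ℕ) = 0
      · have hMrq : ∀ r : Fin (2*j+1), Mtr R a (2*j+1) r q =
            if r = (⟨1, by omega⟩ : Fin (2*j+1)) then 1 else 0 := by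
          intro r
          simp only [Mtr, Matrix.of_apply, Fin.ext_iff, Fin.val_mk]
          split_ifs <;> first | rfl | omega
        rw [Finset.sum_congr rfl (fun r _ => by rw [hMrq r]), sum_mul_ite_one, mul_one,
          ih p ⟨1, by omega⟩ (by rw [Fin.val_mk]; omega)]
        simp only [ZA]
        rw [if_pos (by omega : a ≤ a + ((q:ℕ):ℤ)), ZA_below R a (a + ((q:ℕ):ℤ) - 1) (a + ((p:ℕ):ℤ)) k (by omega), mul_zero,
          add_zero]
        congr 2
        rw [Fin.val_mk]
        omega
      · have hMrq : ∀ r : Fin (2*j+1), Mtr R a (2*j+1) r q =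
            if r = (⟨(q:ℕ) + 1, by omega⟩ : Fin (2*j+1)) then 1
            else if r = (⟨(q:ℕ) - 1, by omega⟩ : Fin (2*j+1)) then R (a + ((q:ℕ):ℤ)) else 0 := by
          intro r
          simp only [Mtr, Matrix.of_apply, Fin.ext_iff, Fin.val_mk]
          split_ifs <;> first | rfl | omega | (congr 1; omega)
        rw [Finset.sum_congr rfl (fun r _ => by rw [hMrq r]), sum_mul_ite_two _ _ _
          (by simp only [Ne, Fin.ext_iff, Fin.val_mk]; omega), mul_one,
          ih p ⟨(q:ℕ) + 1, by omega⟩ (by rw [Fin.val_mk]; omega),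
          ih p ⟨(q:ℕ) - 1, by omega⟩ (by rw [Fin.val_mk]; omega)]
        simp only [ZA, Fin.val_mk]
        rw [if_pos (by omega : a ≤ a + ((q:ℕ):ℤ))]
        have e1 : a + (((q:ℕ) + 1 : ℕ):ℤ) = a + ((q:ℕ):ℤ) + 1 := by omega
        have e2 : a + (((q:ℕ) - 1 : ℕ):ℤ) = a + ((q:ℕ):ℤ) - 1 := by omega
        rw [e1, e2]
        ring

def uvec (R : ℤ → A) (a : ℤ) (N : ℕ) : ℕ → (Fin N → A)
  | 0 => fun p => if (p : ℕ) = 0 then 1 else 0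
  | 1 => Matrix.mulVec (Mtr R a N) (fun p => if (p : ℕ) = 0 then 1 else 0)
  | (t+2) => Matrix.mulVec (Mtr R a N) (uvec R a N (t+1)) - R (a + (t : ℤ) + 1) • uvec R a N t

lemma mulVec_e (R : ℤ → A) (a : ℤ) (N t : ℕ) (ht : t + 1 < N) :
    Matrix.mulVec (Mtr R a N) (fun p => if (p : ℕ) = t then 1 else 0) =
    fun p : Fin N => (if (p : ℕ) = t + 1 then (1:A) else 0) +
      (if (p : ℕ) + 1 = t then R (a + (t : ℤ)) else 0) := by
  funext p
  show ∑ q : Fin N, Mtr R a N p q * (if (q : ℕ) = t then 1 else 0) = _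
  have : ∀ q : Fin N, (if (q : ℕ) = t then (1:A) else 0) =
      (if q = (⟨t, by omega⟩ : Fin N) then 1 else 0) := by
    intro q; simp only [Fin.ext_iff, Fin.val_mk]
  rw [Finset.sum_congr rfl (fun q _ => by rw [this q]), sum_mul_ite_one, mul_one]
  simp only [Mtr, Matrix.of_apply, Fin.val_mk]
  split_ifs with h1 h2 h3 <;> first | ring1 | (exfalso; omega)

lemma uvec_eq_e (R : ℤ → A) (a : ℤ) (j : ℕ) : ∀ t, t ≤ 2*j →
    uvec R a (2*j+1) t = fun p : Fin (2*j+1) => if (p : ℕ) = t then (1:A) else 0 := by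
  intro t
  induction t using Nat.strong_induction_on with
  | _ t ih =>
    match t with
    | 0 => intro _; rfl
    | 1 =>
        intro ht
        show Matrix.mulVec (Mtr R a (2*j+1)) _ = _
        rw [mulVec_e R a (2*j+1) 0 (by omega)]
        funext p
        simp
    | (t+2) =>
        intro ht
        show Matrix.mulVec (Mtr R a (2*j+1)) (uvec R a (2*j+1) (t+1)) - _ = _
        rw [ih (t+1) (by omega) (by omega), ih t (by omega) (by omega),
          mulVec_e R a (2*j+1) (t+1) (by omega)]
        funext p
        simp only [Pi.sub_apply, Pi.smul_apply, smul_eq_mul]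
        have hc : a + ((t+1 : ℕ) : ℤ) = a + (t : ℤ) + 1 := by push_cast; ring
        rw [hc]
        split_ifs with h1 h2 h3 h4 <;> first | ring1 | (exfalso; omega)

lemma mulVec_sum_smul {N : ℕ} (M : Matrix (Fin N) (Fin N) A) {ι : Type*} (s : Finset ι)
    (c : ι → A) (v : ι → Fin N → A) :
    Matrix.mulVec M (∑ i ∈ s, c i • v i) = ∑ i ∈ s, c i • Matrix.mulVec M (v i) := by
  classical
  induction s using Finset.induction_on with
  | empty => simp [Matrix.mulVec_zero]
  | insert x s hx ih =>
      rw [Finset.sum_insert hx, Finset.sum_insert hx, Matrix.mulVec_add, ih,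
        Matrix.mulVec_smul]

lemma uvec_eq_sum (R : ℤ → A) (a : ℤ) (j : ℕ) : ∀ t, t ≤ 2*j →
    uvec R a (2*j+1) t = ∑ i ∈ Finset.range (j+1),
      ((-1:A)^i * Pdim R a (a + (t:ℤ) - 1) i) •
        Matrix.mulVec ((Mtr R a (2*j+1)) ^ (t - 2*i))
          (fun p : Fin (2*j+1) => if (p:ℕ) = 0 then (1:A) else 0) := by
  intro t
  induction t using Nat.strong_induction_on with
  | _ t ih =>
    match t with
    | 0 =>
        intro _
        rw [Finset.sum_eq_single 0 (fun i _ hi => by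
            rw [Pdim_of_empty R a _ (by omega) i hi, mul_zero, zero_smul])
          (fun h => absurd (Finset.mem_range.2 (by omega)) h)]
        rw [Pdim_zero, pow_zero, mul_one, Nat.sub_zero, pow_zero, Matrix.one_mulVec, one_smul]
        rfl
    | 1 =>
        intro _
        rw [Finset.sum_eq_single 0 (fun i _ hi => by
            rw [Pdim_of_empty R a _ (by omega) i hi, mul_zero, zero_smul])
          (fun h => absurd (Finset.mem_range.2 (by omega)) h)]
        rw [Pdim_zero, pow_zero, mul_one, Nat.sub_zero, pow_one, one_smul]
        rfl
    | (t+2) =>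
        intro ht
        show Matrix.mulVec (Mtr R a (2*j+1)) (uvec R a (2*j+1) (t+1)) -
          R (a + (t:ℤ) + 1) • uvec R a (2*j+1) t = _
        rw [ih (t+1) (by omega) (by omega), ih t (by omega) (by omega), mulVec_sum_smul,
          Finset.smul_sum]
        have ec : a + ((t+1:ℕ):ℤ) - 1 = a + (t:ℤ) := by push_cast; ring
        have ee : a + ((t+2:ℕ):ℤ) - 1 = a + (t:ℤ) + 1 := by push_cast; ring
        simp only [smul_smul]
        rw [ec, ee]
        have hA : ∀ i ∈ Finset.range (j+1),
            ((-1:A)^i * Pdim R a (a + (t:ℤ)) i) •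
              Matrix.mulVec (Mtr R a (2*j+1))
                (Matrix.mulVec ((Mtr R a (2*j+1)) ^ (t+1 - 2*i))
                  (fun p : Fin (2*j+1) => if (p:ℕ) = 0 then (1:A) else 0)) =
            ((-1:A)^i * Pdim R a (a + (t:ℤ)) i) •
              Matrix.mulVec ((Mtr R a (2*j+1)) ^ (t+2 - 2*i))
                (fun p : Fin (2*j+1) => if (p:ℕ) = 0 then (1:A) else 0) := by
          intro i _
          by_cases h2i : 2*i ≤ t+1
          · rw [Matrix.mulVec_mulVec, ← pow_succ', show (t+1-2*i)+1 = t+2-2*i by omega]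
          · rw [Pdim_of_big R a _ i (by omega), mul_zero, zero_smul, zero_smul]
        rw [Finset.sum_congr rfl hA]
        have key : ∑ i ∈ Finset.range (j+1),
            (R (a + (t:ℤ) + 1) * ((-1:A)^i * Pdim R a (a + (t:ℤ) - 1) i)) •
              Matrix.mulVec ((Mtr R a (2*j+1)) ^ (t - 2*i))
                (fun p : Fin (2*j+1) => if (p:ℕ) = 0 then (1:A) else 0) =
            ∑ i ∈ Finset.range (j+1),
              (((-1:A)^i * Pdim R a (a + (t:ℤ)) i) -
                ((-1:A)^i * Pdim R a (a + (t:ℤ) + 1) i)) •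
              Matrix.mulVec ((Mtr R a (2*j+1)) ^ (t+2 - 2*i))
                (fun p : Fin (2*j+1) => if (p:ℕ) = 0 then (1:A) else 0) := by
          conv_lhs => rw [Finset.sum_range_succ]
          conv_rhs => rw [Finset.sum_range_succ']
          rw [Pdim_of_big R a (a + (t:ℤ) - 1) j (by omega), mul_zero, mul_zero, zero_smul,
            add_zero]
          rw [Pdim_zero, Pdim_zero, pow_zero, mul_one, sub_self, zero_smul, add_zero]
          apply Finset.sum_congr rfl
          intro i _
          rw [show (t+2) - 2*(i+1) = t - 2*i by omega]
          rw [Pdim_succ R a (a + (t:ℤ)) (by omega) i]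
          congr 1
          ring
        rw [key, ← Finset.sum_sub_distrib]
        apply Finset.sum_congr rfl
        intro i _
        rw [← sub_smul]
        congr 1
        ring

lemma mulVec_e0_apply {N : ℕ} (hN : 0 < N) (M : Matrix (Fin N) (Fin N) A) (p : Fin N) :
    Matrix.mulVec M (fun q : Fin N => if (q:ℕ) = 0 then (1:A) else 0) p = M p ⟨0, hN⟩ := by
  show ∑ q : Fin N, M p q * _ = _
  rw [Finset.sum_congr rfl (fun q _ => by
    rw [show (if ((q : Fin N):ℕ) = 0 then (1:A) else 0) =
        (if q = (⟨0, hN⟩ : Fin N) then (1:A) else 0) from by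
      simp only [Fin.ext_iff, Fin.val_mk]]), sum_mul_ite_one, mul_one]

lemma Kkey (R : ℤ → A) (a : ℤ) (j l : ℕ) (hl : l ≤ j) :
    ∑ i ∈ Finset.range (j+1),
      (-1:A)^i * Pdim R a (a + 2*(j:ℤ) - 1) i * Zwp R a (a + 2*(l:ℤ)) (2*(j-i)) =
    if l = j then 1 else 0 := by
  have h2 := uvec_eq_sum R a j (2*j) le_rfl
  rw [uvec_eq_e R a j (2*j) le_rfl] at h2
  have h4 : (if l = j then (1:A) else 0) = ∑ i ∈ Finset.range (j+1),
      (((-1:A)^i * Pdim R a (a + ((2*j:ℕ):ℤ) - 1) i) •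
        (Matrix.mulVec ((Mtr R a (2*j+1)) ^ (2*j - 2*i))
          (fun p : Fin (2*j+1) => if (p:ℕ) = 0 then (1:A) else 0))) ⟨2*l, by omega⟩ := by
    rw [← Finset.sum_apply _ _
      (fun i => ((-1:A)^i * Pdim R a (a + ((2*j:ℕ):ℤ) - 1) i) •
        (Matrix.mulVec ((Mtr R a (2*j+1)) ^ (2*j - 2*i))
          (fun p : Fin (2*j+1) => if (p:ℕ) = 0 then (1:A) else 0))), ← h2]
    show (if l = j then (1:A) else 0) = if 2*l = 2*j then (1:A) else 0
    split_ifs <;> first | rfl | (exfalso; omega)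
  rw [h4]
  apply Finset.sum_congr rfl
  intro i _
  rw [Pi.smul_apply, smul_eq_mul, mulVec_e0_apply (by omega),
    matpow_eq_ZA R a j (2*j - 2*i) ⟨2*l, by omega⟩ ⟨0, by omega⟩ (by rw [Fin.val_mk]; omega)]
  have ea : a + (((((⟨0, by omega⟩ : Fin (2*j+1))):ℕ)):ℤ) = a := by rw [Fin.val_mk]; omega
  have eb : a + (((((⟨2*l, by omega⟩ : Fin (2*j+1))):ℕ)):ℤ) = a + 2*(l:ℤ) := by
    rw [Fin.val_mk]; push_cast; ring
  rw [ea, eb, show 2*j - 2*i = 2*(j-i) by omega, ← Zwp_eq_ZA, mul_assoc,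
    show a + ((2*j:ℕ):ℤ) - 1 = a + 2*(j:ℤ) - 1 by push_cast; ring, ← mul_assoc]

lemma Gam_eq (R : ℤ → A) (g : ℕ → A) (m : ℕ) (i : ℕ) (n : ℤ) :
    Gam R g m i n = Zwp R (n-1) (n-1) (2*i) *
        (R (n - 1) - Vp R g m (n - 1) (n - 2) + (if n = 0 then 1 else 0)) -
      ∑ j ∈ Finset.Icc 1 i,
        Zwp R (n - 1) (n - 1 + 2 * (j : ℤ)) (2 * i) * Vp R g m (n + 2 * (j : ℤ) - 1) (n - 2) := by
  by_cases hi : i = 0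
  · subst hi
    rw [Gam, if_pos rfl, show 2*0 = 0 from rfl, Zwp_zero, one_mul,
      Finset.Icc_eq_empty (by omega), Finset.sum_empty, sub_zero]
  · rw [Gam, if_neg hi]

/-- inversion formula expressing `V'` in terms of the `Γ`'s. -/
theorem stmt_7 {A : Type*} [CommRing A] (R : ℤ → A) (m : ℕ) (hm : 1 ≤ m) (g : ℕ → A)
    (n : ℤ) (hn : 0 ≤ n) (j : ℕ) :
    Vp R g m (n + 2 * (j : ℤ) - 1) (n - 2) =
      ∑ i ∈ Finset.range (j + 1),
          (-1 : A) ^ (i + 1) * Pdim R (n - 1) (n + 2 * (j : ℤ) - 2) i * Gam R g m (j - i) n +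
        (if j = 0 then R (n - 1) + (if n = 0 then 1 else 0) else 0) := by
  by_cases hj : j = 0
  · subst hj
    rw [Finset.range_one, Finset.sum_singleton, if_pos rfl]
    rw [show (0 - 0 : ℕ) = 0 from rfl, Gam, if_pos rfl, Pdim_zero, pow_one, mul_one,
      show n + 2 * ((0:ℕ):ℤ) - 1 = n - 1 by push_cast; ring]
    ring
  · rw [if_neg hj, add_zero,
      show n + 2*(j:ℤ) - 2 = n - 1 + 2*(j:ℤ) - 1 from by ring]
    rw [Finset.sum_congr rfl (fun i _ => by rw [Gam_eq R g m (j-i) n])]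
    have hterm : ∀ i ∈ Finset.range (j+1),
        (-1:A)^(i+1) * Pdim R (n-1) (n - 1 + 2*(j:ℤ) - 1) i *
          (Zwp R (n-1) (n-1) (2*(j-i)) *
            (R (n - 1) - Vp R g m (n - 1) (n - 2) + (if n = 0 then 1 else 0)) -
          ∑ j' ∈ Finset.Icc 1 (j-i),
            Zwp R (n - 1) (n - 1 + 2 * (j' : ℤ)) (2 * (j-i)) *
              Vp R g m (n + 2 * (j' : ℤ) - 1) (n - 2)) =
        -(((-1:A)^i * Pdim R (n-1) (n - 1 + 2*(j:ℤ) - 1) i * Zwp R (n-1) (n-1) (2*(j-i))) *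
            (R (n - 1) - Vp R g m (n - 1) (n - 2) + (if n = 0 then 1 else 0))) +
          ∑ j' ∈ Finset.Icc 1 j,
            ((-1:A)^i * Pdim R (n-1) (n - 1 + 2*(j:ℤ) - 1) i *
              Zwp R (n - 1) (n - 1 + 2 * (j' : ℤ)) (2 * (j-i))) *
              Vp R g m (n + 2 * (j' : ℤ) - 1) (n - 2) := by
      intro i _
      have hext : (∑ j' ∈ Finset.Icc 1 (j-i),
            Zwp R (n - 1) (n - 1 + 2 * (j' : ℤ)) (2 * (j-i)) *
              Vp R g m (n + 2 * (j' : ℤ) - 1) (n - 2)) =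
          ∑ j' ∈ Finset.Icc 1 j,
            Zwp R (n - 1) (n - 1 + 2 * (j' : ℤ)) (2 * (j-i)) *
              Vp R g m (n + 2 * (j' : ℤ) - 1) (n - 2) :=
        Finset.sum_subset (Finset.Icc_subset_Icc_right (Nat.sub_le j i))
          (fun x hx hnx => by
            rw [Zwp_far R (n-1) _ _ (by
              rw [Finset.mem_Icc] at hx
              simp only [Finset.mem_Icc, not_and, not_le] at hnx
              have := hnx hx.1
              push_cast
              omega), zero_mul])
      rw [hext]
      have hpull : ∑ j' ∈ Finset.Icc 1 j,
          ((-1:A)^i * Pdim R (n-1) (n - 1 + 2*(j:ℤ) - 1) i *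
            Zwp R (n - 1) (n - 1 + 2 * (j' : ℤ)) (2 * (j-i))) *
            Vp R g m (n + 2 * (j' : ℤ) - 1) (n - 2) =
          ((-1:A)^i * Pdim R (n-1) (n - 1 + 2*(j:ℤ) - 1) i) *
          ∑ j' ∈ Finset.Icc 1 j,
            Zwp R (n - 1) (n - 1 + 2 * (j' : ℤ)) (2 * (j-i)) *
              Vp R g m (n + 2 * (j' : ℤ) - 1) (n - 2) := by
        rw [Finset.mul_sum]
        exact Finset.sum_congr rfl (fun j' _ => by ring)
      rw [hpull]
      ring
    rw [Finset.sum_congr rfl hterm, Finset.sum_add_distrib]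
    have hpart1 : ∑ i ∈ Finset.range (j+1),
        -(((-1:A)^i * Pdim R (n-1) (n - 1 + 2*(j:ℤ) - 1) i * Zwp R (n-1) (n-1) (2*(j-i))) *
            (R (n - 1) - Vp R g m (n - 1) (n - 2) + (if n = 0 then 1 else 0))) = 0 := by
      rw [Finset.sum_neg_distrib, ← Finset.sum_mul]
      have K0 := Kkey R (n-1) j 0 (by omega)
      simp only [Nat.cast_zero, mul_zero, add_zero] at K0
      rw [K0, if_neg (by omega), zero_mul, neg_zero]
    rw [hpart1, zero_add, Finset.sum_comm]
    have hpart2 : ∀ j' ∈ Finset.Icc 1 j,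
        ∑ i ∈ Finset.range (j+1),
          ((-1:A)^i * Pdim R (n-1) (n - 1 + 2*(j:ℤ) - 1) i *
            Zwp R (n - 1) (n - 1 + 2 * (j' : ℤ)) (2 * (j-i))) *
            Vp R g m (n + 2 * (j' : ℤ) - 1) (n - 2) =
        (if j' = j then (1:A) else 0) * Vp R g m (n + 2 * (j' : ℤ) - 1) (n - 2) := by
      intro j' hj'
      rw [Finset.mem_Icc] at hj'
      rw [← Finset.sum_mul]
      congr 1
      exact Kkey R (n-1) j j' hj'.2
    rw [Finset.sum_congr rfl hpart2]
    rw [Finset.sum_congr rfl (fun j' _ => by rw [ite_mul, one_mul, zero_mul]),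
      Finset.sum_ite_eq' (Finset.Icc 1 j) j
        (fun j' => Vp R g m (n + 2 * (j' : ℤ) - 1) (n - 2)),
      if_pos (Finset.mem_Icc.2 ⟨by omega, le_rfl⟩)]
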